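/- Let T ⊆ ℝ² be the reference triangle conv{(0,0), (1,0), (0,1)} and let b(x,y) = x·y·(1 − x − y) be the (cubic) bubble function on T, which is positive in the interior of T and vanishes on ∂T. For every k ∈ ℕ there exists a constant c > 0 such that for every polynomial p in two variables of total degree at most k, ∫_T p(x,y)² dx dy ≤ c · ∫_T b(x,y)·p(x,y)² dx dy. -/

import Mathlib

open Metric MeasureTheory
open MvPolynomial

set_option maxHeartbeats 1000000
set_option synthInstance.maxHeartbeats 400000

local notation "E2" => EuclideanSpace ℝ (Fin 2)

noncomputable section

theorem evP_analytic (p : MvPolynomial (Fin 2) ℝ) :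
    AnalyticOnNhd ℝ (fun y : Fin 2 → ℝ => eval y p) Set.univ := by
  have h := AnalyticOnNhd.eval_continuousLinearMap
    (ContinuousLinearMap.id ℝ (Fin 2 → ℝ)) p
  exact h

theorem evP_continuous (p : MvPolynomial (Fin 2) ℝ) :
    Continuous (fun y : Fin 2 → ℝ => eval y p) :=
  MvPolynomial.continuous_eval p

theorem exists_eval_ne_zero {p : MvPolynomial (Fin 2) ℝ} (hp : p ≠ 0) :
    ∃ y : Fin 2 → ℝ, (0 < y 0 ∧ 0 < y 1 ∧ y 0 + y 1 < 1) ∧ eval y p ≠ 0 := by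
  by_contra h
  push_neg at h
  have hU : IsOpen {y : Fin 2 → ℝ | 0 < y 0 ∧ 0 < y 1 ∧ y 0 + y 1 < 1} := by
    have h0 : IsOpen {y : Fin 2 → ℝ | 0 < y 0} :=
      isOpen_lt continuous_const (continuous_apply 0)
    have h1 : IsOpen {y : Fin 2 → ℝ | 0 < y 1} :=
      isOpen_lt continuous_const (continuous_apply 1)
    have h2 : IsOpen {y : Fin 2 → ℝ | y 0 + y 1 < 1} :=
      isOpen_lt ((continuous_apply 0).add (continuous_apply 1)) continuous_const
    exact (h0.and (h1.and h2) : _)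
  have hy0 : (![1/4, 1/4] : Fin 2 → ℝ) ∈ {y : Fin 2 → ℝ | 0 < y 0 ∧ 0 < y 1 ∧ y 0 + y 1 < 1} := by
    refine ⟨by norm_num, by norm_num, by norm_num⟩
  have hev : (fun y : Fin 2 → ℝ => eval y p) =ᶠ[nhds (![1/4, 1/4] : Fin 2 → ℝ)] 0 := by
    filter_upwards [hU.mem_nhds hy0] with y hy
    exact h y hy
  have := (evP_analytic p).eqOn_zero_of_preconnected_of_eventuallyEq_zero
    isPreconnected_univ (Set.mem_univ _) hev
  apply hp
  apply MvPolynomial.funext (q := 0)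
  intro y
  simpa using this (Set.mem_univ y)


def Tri : Set E2 := convexHull ℝ ({!₂[0, 0], !₂[1, 0], !₂[0, 1]} : Set E2)

theorem Tri_compact : IsCompact Tri :=
  (Set.toFinite _).isCompact_convexHull ℝ

theorem Tri_measurable : MeasurableSet Tri :=
  Tri_compact.isClosed.measurableSet

theorem Tri_subset :
    Tri ⊆ {x : E2 | 0 ≤ x 0 ∧ 0 ≤ x 1 ∧ x 0 + x 1 ≤ 1} := by
  apply convexHull_min
  · intro x hx
    rcases hx with h | h | h <;> subst h <;>
      refine ⟨by norm_num, by norm_num, by norm_num⟩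
  · intro x hx y hy a b ha hb hab
    have hx0 : (a • x + b • y) 0 = a * x 0 + b * y 0 := rfl
    have hx1 : (a • x + b • y) 1 = a * x 1 + b * y 1 := rfl
    refine ⟨?_, ?_, ?_⟩
    · rw [hx0]; have := hx.1; have := hy.1; positivity
    · rw [hx1]; have := hx.2.1; have := hy.2.1; positivity
    · rw [hx0, hx1]
      have h1 := hx.2.2; have h2 := hy.2.2
      nlinarith [hx.1, hy.1, hx.2.1, hy.2.1]

theorem U_subset_Tri {x : E2} (h0 : 0 < x 0) (h1 : 0 < x 1) (h2 : x 0 + x 1 < 1) :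
    x ∈ Tri := by
  have := Finset.centerMass_mem_convexHull (Finset.univ : Finset (Fin 3))
    (w := ![x 0, x 1, 1 - x 0 - x 1])
    (z := ![!₂[1, 0], !₂[0, 1], !₂[0, 0]])
    (by intro i _; fin_cases i <;> simp <;> try linarith)
    (by simp [Fin.sum_univ_three])
    (s := ({!₂[0, 0], !₂[1, 0], !₂[0, 1]} : Set E2))
    (by intro i _; fin_cases i <;> simp)
  have hcm : (Finset.univ : Finset (Fin 3)).centerMass ![x 0, x 1, 1 - x 0 - x 1]
      ![!₂[1, 0], !₂[0, 1], !₂[0, 0]] = x := by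
    rw [Finset.centerMass]
    rw [Fin.sum_univ_three, Fin.sum_univ_three]
    have hsum : (![x 0, x 1, 1 - x 0 - x 1] : Fin 3 → ℝ) 0 +
        (![x 0, x 1, 1 - x 0 - x 1] : Fin 3 → ℝ) 1 +
        (![x 0, x 1, 1 - x 0 - x 1] : Fin 3 → ℝ) 2 = 1 := by simp
    rw [hsum]
    ext i
    fin_cases i <;>
      simp [Matrix.cons_val_zero, Matrix.cons_val_one]
  rw [hcm] at this
  exact this


def w (x : E2) : ℝ := x 0 * x 1 * (1 - x 0 - x 1)

def ev (p : MvPolynomial (Fin 2) ℝ) (x : E2) : ℝ :=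
  MvPolynomial.eval (fun i => x i) p

theorem coord_continuous (i : Fin 2) : Continuous fun x : E2 => x i :=
  (continuous_apply i).comp (PiLp.continuousLinearEquiv 2 ℝ (fun _ : Fin 2 => ℝ)).continuous

theorem w_continuous : Continuous w :=
  ((coord_continuous 0).mul (coord_continuous 1)).mul
    ((continuous_const.sub (coord_continuous 0)).sub (coord_continuous 1))

theorem ev_continuous (p : MvPolynomial (Fin 2) ℝ) : Continuous (ev p) :=
  (MvPolynomial.continuous_eval p).comp
    (continuous_pi fun i => coord_continuous i)

theorem integrableOn_Tri {f : E2 → ℝ} (hf : Continuous f) : IntegrableOn f Tri :=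
  hf.continuousOn.integrableOn_compact Tri_compact

theorem exists_eval_ne_zero' {p : MvPolynomial (Fin 2) ℝ} (hp : p ≠ 0) :
    ∃ x : E2, (0 < x 0 ∧ 0 < x 1 ∧ x 0 + x 1 < 1) ∧ ev p x ≠ 0 := by
  obtain ⟨y, hyU, hy⟩ := exists_eval_ne_zero hp
  exact ⟨(WithLp.equiv 2 (Fin 2 → ℝ)).symm y, ⟨hyU.1, hyU.2.1, hyU.2.2⟩, hy⟩

theorem weighted_pos {p : MvPolynomial (Fin 2) ℝ} (hp : p ≠ 0) :
    0 < ∫ x in Tri, w x * (ev p x) ^ 2 := by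
  have hcont : Continuous fun x : E2 => w x * (ev p x) ^ 2 :=
    w_continuous.mul ((ev_continuous p).pow 2)
  rw [setIntegral_pos_iff_support_of_nonneg_ae]
  · -- 0 < volume (support ∩ Tri)
    obtain ⟨x₁, hx₁U, hx₁⟩ := exists_eval_ne_zero' hp
    set V : Set E2 := {x : E2 | (0 < x 0 ∧ 0 < x 1 ∧ x 0 + x 1 < 1) ∧ ev p x ≠ 0} with hV
    have hVopen : IsOpen V := by
      have h0 : IsOpen {x : E2 | 0 < x 0} := isOpen_lt continuous_const (coord_continuous 0)
      have h1 : IsOpen {x : E2 | 0 < x 1} := isOpen_lt continuous_const (coord_continuous 1)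
      have h2 : IsOpen {x : E2 | x 0 + x 1 < 1} :=
        isOpen_lt ((coord_continuous 0).add (coord_continuous 1)) continuous_const
      have h3 : IsOpen {x : E2 | ev p x ≠ 0} := isOpen_ne_fun (ev_continuous p) continuous_const
      exact ((h0.and (h1.and h2)).and h3 : _)
    have hVsub : V ⊆ Function.support (fun x : E2 => w x * (ev p x) ^ 2) ∩ Tri := by
      intro x hx
      obtain ⟨⟨hx0, hx1, hx2⟩, hxe⟩ := hx
      refine ⟨?_, U_subset_Tri hx0 hx1 hx2⟩
      have hw : 0 < w x := by
        have : 0 < 1 - x 0 - x 1 := by linarith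
        have := mul_pos (mul_pos hx0 hx1) this
        simpa [w, mul_assoc] using this
      simp only [Function.mem_support]
      positivity
    calc (0 : ENNReal) < volume V :=
          hVopen.measure_pos volume ⟨x₁, hx₁U, hx₁⟩
      _ ≤ _ := measure_mono hVsub
  · -- nonneg a.e.
    refine ae_restrict_of_forall_mem Tri_measurable ?_
    intro x hx
    obtain ⟨h0, h1, h2⟩ := Tri_subset hx
    have hw : 0 ≤ w x := by
      have : 0 ≤ 1 - x 0 - x 1 := by linarith
      have := mul_nonneg (mul_nonneg h0 h1) this
      simpa [w, mul_assoc] using this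
    positivity
  · exact integrableOn_Tri hcont

theorem main (k : ℕ) :
    ∃ c : ℝ, 0 < c ∧ ∀ p : MvPolynomial (Fin 2) ℝ, p.totalDegree ≤ k →
      (∫ x in Tri, (ev p x) ^ 2) ≤ c * ∫ x in Tri, w x * (ev p x) ^ 2 := by
  classical
  set V := MvPolynomial.restrictTotalDegree (Fin 2) ℝ k with hVdef
  set n := Module.finrank ℝ V with hndef
  set B : Module.Basis (Fin n) ℝ V := Module.finBasis ℝ V with hBdef
  set g : Fin n → E2 → ℝ := fun i => ev ((B i : V) : MvPolynomial (Fin 2) ℝ) with hgdef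
  set Φ : (Fin n → ℝ) → E2 → ℝ :=
    fun c => ev ((B.equivFun.symm c : V) : MvPolynomial (Fin 2) ℝ) with hΦdef
  have g_cont : ∀ i, Continuous (g i) := fun i => ev_continuous _
  have hΦ : ∀ (c : Fin n → ℝ) x, Φ c x = ∑ i, c i * g i x := by
    intro c x
    simp only [hΦdef, hgdef, ev, Module.Basis.equivFun_symm_apply]
    rw [Submodule.coe_sum, map_sum]
    refine Finset.sum_congr rfl fun i _ => ?_
    rw [Submodule.coe_smul, MvPolynomial.smul_eval]
  have hΦs : ∀ (a : ℝ) (c : Fin n → ℝ) x, Φ (a • c) x = a * Φ c x := by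
    intro a c x
    have hs : B.equivFun.symm (a • c) = a • B.equivFun.symm c :=
      map_smul B.equivFun.symm a c
    simp only [hΦdef, ev]
    rw [hs, Submodule.coe_smul, MvPolynomial.smul_eval]
  have key : ∀ h : E2 → ℝ, Continuous h → ∀ c : Fin n → ℝ,
      (∫ x in Tri, h x * (Φ c x) ^ 2) =
        ∑ i, ∑ j, c i * c j * ∫ x in Tri, h x * (g i x * g j x) := by
    intro h hh c
    have hpt : ∀ x : E2, h x * (Φ c x) ^ 2 =
        ∑ i, ∑ j, c i * c j * (h x * (g i x * g j x)) := by
      intro x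
      rw [hΦ, sq, Finset.sum_mul_sum, Finset.mul_sum]
      refine Finset.sum_congr rfl fun i _ => ?_
      rw [Finset.mul_sum]
      exact Finset.sum_congr rfl fun j _ => by ring
    simp_rw [hpt]
    rw [integral_finset_sum]
    · refine Finset.sum_congr rfl fun i _ => ?_
      rw [integral_finset_sum]
      · exact Finset.sum_congr rfl fun j _ => integral_const_mul _ _
      · intro j _
        exact integrableOn_Tri (continuous_const.mul (hh.mul ((g_cont i).mul (g_cont j))))
    · intro i _
      apply integrable_finset_sum
      intro j _
      exact integrableOn_Tri (continuous_const.mul (hh.mul ((g_cont i).mul (g_cont j))))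
  set Q1 : (Fin n → ℝ) → ℝ := fun c => ∫ x in Tri, (Φ c x) ^ 2 with hQ1def
  set Q2 : (Fin n → ℝ) → ℝ := fun c => ∫ x in Tri, w x * (Φ c x) ^ 2 with hQ2def
  have hQ1eq : ∀ c, Q1 c = ∑ i, ∑ j, c i * c j * ∫ x in Tri, g i x * g j x := by
    intro c
    have h := key (fun _ => 1) continuous_const c
    simp only [one_mul] at h
    simpa [hQ1def] using h
  have hQ2eq : ∀ c, Q2 c = ∑ i, ∑ j, c i * c j * ∫ x in Tri, w x * (g i x * g j x) :=
    fun c => key w w_continuous c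
  have hQ1c : Continuous Q1 := by
    have : Q1 = fun c => ∑ i, ∑ j, c i * c j * ∫ x in Tri, g i x * g j x :=
      funext hQ1eq
    rw [this]
    exact continuous_finset_sum _ fun i _ => continuous_finset_sum _ fun j _ =>
      ((continuous_apply i).mul (continuous_apply j)).mul continuous_const
  have hQ2c : Continuous Q2 := by
    have : Q2 = fun c => ∑ i, ∑ j, c i * c j * ∫ x in Tri, w x * (g i x * g j x) :=
      funext hQ2eq
    rw [this]
    exact continuous_finset_sum _ fun i _ => continuous_finset_sum _ fun j _ =>
      ((continuous_apply i).mul (continuous_apply j)).mul continuous_const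
  have hQ1h : ∀ (a : ℝ) c, Q1 (a • c) = a ^ 2 * Q1 c := by
    intro a c
    have hpt : ∀ x : E2, (Φ (a • c) x) ^ 2 = a ^ 2 * (Φ c x) ^ 2 := by
      intro x; rw [hΦs]; ring
    simp only [hQ1def]
    simp_rw [hpt]
    exact integral_const_mul _ _
  have hQ2h : ∀ (a : ℝ) c, Q2 (a • c) = a ^ 2 * Q2 c := by
    intro a c
    have hpt : ∀ x : E2, w x * (Φ (a • c) x) ^ 2 = a ^ 2 * (w x * (Φ c x) ^ 2) := by
      intro x; rw [hΦs]; ring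
    simp only [hQ2def]
    simp_rw [hpt]
    exact integral_const_mul _ _
  have hQ1nonneg : ∀ c, 0 ≤ Q1 c := fun c =>
    setIntegral_nonneg Tri_measurable fun x _ => sq_nonneg _
  have hQ2pos : ∀ c : Fin n → ℝ, c ≠ 0 → 0 < Q2 c := by
    intro c hc
    have hq : ((B.equivFun.symm c : V) : MvPolynomial (Fin 2) ℝ) ≠ 0 := by
      intro h
      apply hc
      have h2 : B.equivFun.symm c = 0 := Subtype.ext h
      exact (LinearEquiv.map_eq_zero_iff _).mp h2
    exact weighted_pos hq
  have hn : 0 < n := by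
    have h1 : (1 : MvPolynomial (Fin 2) ℝ) ∈ V := by
      rw [hVdef, MvPolynomial.mem_restrictTotalDegree]
      simp [MvPolynomial.totalDegree_one]
    haveI : Nontrivial V := ⟨⟨⟨1, h1⟩, 0, by simp [Subtype.ext_iff]⟩⟩
    exact Module.finrank_pos
  haveI : Nonempty (Fin n) := Fin.pos_iff_nonempty.mp hn
  have hsph : (sphere (0 : Fin n → ℝ) 1).Nonempty :=
    NormedSpace.sphere_nonempty.mpr zero_le_one
  obtain ⟨u1, hu1S, hu1⟩ :=
    (isCompact_sphere (0 : Fin n → ℝ) 1).exists_isMinOn hsph hQ2c.continuousOn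
  obtain ⟨u2, hu2S, hu2⟩ :=
    (isCompact_sphere (0 : Fin n → ℝ) 1).exists_isMaxOn hsph hQ1c.continuousOn
  have hm : 0 < Q2 u1 := hQ2pos u1 (ne_of_mem_sphere hu1S one_ne_zero)
  have hM : 0 ≤ Q1 u2 := hQ1nonneg u2
  refine ⟨(Q1 u2 + 1) / Q2 u1, by positivity, ?_⟩
  intro p hp
  have hpV : p ∈ V := by
    rw [hVdef, MvPolynomial.mem_restrictTotalDegree]; exact hp
  set c0 : Fin n → ℝ := B.equivFun ⟨p, hpV⟩ with hc0def
  have hΦc0 : Φ c0 = ev p := by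
    simp only [hΦdef, hc0def, LinearEquiv.symm_apply_apply]
  have e1 : (∫ x in Tri, (ev p x) ^ 2) = Q1 c0 := by
    simp only [hQ1def, hΦc0]
  have e2 : (∫ x in Tri, w x * (ev p x) ^ 2) = Q2 c0 := by
    simp only [hQ2def, hΦc0]
  rw [e1, e2]
  rcases eq_or_ne c0 0 with h0 | h0
  · have hΦ0 : ∀ x : E2, Φ (0 : Fin n → ℝ) x = 0 := by
      intro x; rw [hΦ]; simp
    have hq1 : Q1 (0 : Fin n → ℝ) = 0 := by
      simp only [hQ1def]; simp_rw [hΦ0]; simp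
    have hq2 : Q2 (0 : Fin n → ℝ) = 0 := by
      simp only [hQ2def]; simp_rw [hΦ0]; simp
    rw [h0, hq1, hq2, mul_zero]
  · have hnorm : ‖c0‖ ≠ 0 := norm_ne_zero_iff.mpr h0
    have hnormpos : 0 < ‖c0‖ := norm_pos_iff.mpr h0
    set u : Fin n → ℝ := ‖c0‖⁻¹ • c0 with hudef
    have huS : u ∈ sphere (0 : Fin n → ℝ) 1 := by
      rw [mem_sphere_zero_iff_norm, hudef, norm_smul, norm_inv, norm_norm,
        inv_mul_cancel₀ hnorm]
    have hc0u : c0 = ‖c0‖ • u := by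
      rw [hudef, smul_smul, mul_inv_cancel₀ hnorm, one_smul]
    have hQ1u : Q1 u ≤ Q1 u2 := isMaxOn_iff.mp hu2 u huS
    have hQ2u : Q2 u1 ≤ Q2 u := isMinOn_iff.mp hu1 u huS
    have hstep : Q1 u ≤ (Q1 u2 + 1) / Q2 u1 * Q2 u := by
      calc Q1 u ≤ Q1 u2 := hQ1u
        _ ≤ (Q1 u2 + 1) / Q2 u1 * Q2 u1 := by
            rw [div_mul_cancel₀ _ hm.ne']; linarith
        _ ≤ (Q1 u2 + 1) / Q2 u1 * Q2 u := by
            apply mul_le_mul_of_nonneg_left hQ2u (by positivity)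
    have h1 : Q1 c0 = ‖c0‖ ^ 2 * Q1 u := by
      conv_lhs => rw [hc0u]
      rw [hQ1h]
    have h2 : Q2 c0 = ‖c0‖ ^ 2 * Q2 u := by
      conv_lhs => rw [hc0u]
      rw [hQ2h]
    calc Q1 c0 = ‖c0‖ ^ 2 * Q1 u := h1
      _ ≤ ‖c0‖ ^ 2 * ((Q1 u2 + 1) / Q2 u1 * Q2 u) :=
          mul_le_mul_of_nonneg_left hstep (by positivity)
      _ = (Q1 u2 + 1) / Q2 u1 * (‖c0‖ ^ 2 * Q2 u) := by ring
      _ = (Q1 u2 + 1) / Q2 u1 * Q2 c0 := by rw [h2]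


end

/-- On the reference triangle, the squared `L₂`-norm of a polynomial of degree at most `k`
is controlled by its bubble-weighted `L₂`-norm. -/
theorem bubble_weighted_norm_equivalence
    (k : ℕ) :
    ∃ c : ℝ, 0 < c ∧
      ∀ p : MvPolynomial (Fin 2) ℝ, p.totalDegree ≤ k →
        (∫ x in convexHull ℝ
            ({!₂[0, 0], !₂[1, 0], !₂[0, 1]} : Set (EuclideanSpace ℝ (Fin 2))),
            (MvPolynomial.eval (fun i => x i) p) ^ 2) ≤
          c * ∫ x in convexHull ℝ
            ({!₂[0, 0], !₂[1, 0], !₂[0, 1]} : Set (EuclideanSpace ℝ (Fin 2))),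
            (x 0 * x 1 * (1 - x 0 - x 1)) * (MvPolynomial.eval (fun i => x i) p) ^ 2 := by
  obtain ⟨c, hc, h⟩ := main k
  exact ⟨c, hc, fun p hp => h p hp⟩
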